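/- For all formulas φ and ψ, φ ≡ ψ if and only if the graphs [φ] and [ψ] are isomorphic. -/

import Mathlib

namespace GSP

/-- Atoms: a propositional variable (coded by a natural number) with a polarity. -/
abbrev Atom := ℕ × Bool

/-- The dual atom. -/
def dualAtom (a : Atom) : Atom := (a.1, !a.2)

/-- A finite, simple, undirected graph whose vertices are labelled by atoms. -/
structure LGraph where
  V : Type
  [fintype : Fintype V]
  adj : V → V → Prop
  symm : ∀ {v w : V}, adj v w → adj w v
  irrefl : ∀ v : V, ¬ adj v v
  label : V → Atom

attribute [instance] LGraph.fintype

namespace LGraph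

/-- An isomorphism of labelled graphs: a vertex bijection preserving labels and
preserving and reflecting edges. -/
structure Iso (G H : LGraph) where
  toEquiv : G.V ≃ H.V
  adj_iff : ∀ v w : G.V, G.adj v w ↔ H.adj (toEquiv v) (toEquiv w)
  label_eq : ∀ v : G.V, H.label (toEquiv v) = G.label v

/-- `G ≅ H` : the graphs `G` and `H` are isomorphic. -/
def iso (G H : LGraph) : Prop := Nonempty (Iso G H)

/-- The empty graph. -/
def empty : LGraph where
  V := Empty
  adj _ _ := False
  symm h := h.elim
  irrefl v := v.elim
  label v := v.elim

/-- The single-vertex graph labelled by the atom `a`. -/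
def single (a : Atom) : LGraph where
  V := Unit
  adj _ _ := False
  symm h := h.elim
  irrefl _ h := h
  label _ := a

def parAdj (G H : LGraph) : G.V ⊕ H.V → G.V ⊕ H.V → Prop
  | .inl a, .inl b => G.adj a b
  | .inr a, .inr b => H.adj a b
  | _, _ => False

/-- The par `G ⅋ H` : disjoint union of `G` and `H`. -/
def par (G H : LGraph) : LGraph where
  V := G.V ⊕ H.V
  adj := parAdj G H
  symm := by
    rintro (a | a) (b | b) h
    · exact G.symm h
    · exact h.elim
    · exact h.elim
    · exact H.symm h
  irrefl := by
    rintro (a | a) h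
    · exact G.irrefl a h
    · exact H.irrefl a h
  label := Sum.elim G.label H.label

def tensorAdj (G H : LGraph) : G.V ⊕ H.V → G.V ⊕ H.V → Prop
  | .inl a, .inl b => G.adj a b
  | .inr a, .inr b => H.adj a b
  | .inl _, .inr _ => True
  | .inr _, .inl _ => True

/-- The tensor `G ⊗ H` : join of `G` and `H` (disjoint union plus all edges in between). -/
def tensor (G H : LGraph) : LGraph where
  V := G.V ⊕ H.V
  adj := tensorAdj G H
  symm := by
    rintro (a | a) (b | b) h
    · exact G.symm h
    · exact trivial
    · exact trivial
    · exact H.symm h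
  irrefl := by
    rintro (a | a) h
    · exact G.irrefl a h
    · exact H.irrefl a h
  label := Sum.elim G.label H.label

/-- The dual graph `Ḡ` : same vertices, complemented edges, dualized labels. -/
def dual (G : LGraph) : LGraph where
  V := G.V
  adj v w := v ≠ w ∧ ¬ G.adj v w
  symm h := ⟨fun e => h.1 e.symm, fun h' => h.2 (G.symm h')⟩
  irrefl _ h := h.1 rfl
  label v := dualAtom (G.label v)

def plugAdj (C : LGraph) (R : Set C.V) (X : LGraph) : C.V ⊕ X.V → C.V ⊕ X.V → Prop
  | .inl a, .inl b => C.adj a b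
  | .inr a, .inr b => X.adj a b
  | .inl a, .inr _ => a ∈ R
  | .inr _, .inl b => b ∈ R

/-- `C[X]_R` : the graph obtained from the context `C[·]_R` by inserting the graph `X`
as a module whose vertices are adjacent exactly to the vertices in `R`. -/
def plug (C : LGraph) (R : Set C.V) (X : LGraph) : LGraph where
  V := C.V ⊕ X.V
  adj := plugAdj C R X
  symm := by
    rintro (a | a) (b | b) h
    · exact C.symm h
    · exact h
    · exact h
    · exact X.symm h
  irrefl := by
    rintro (a | a) h
    · exact C.irrefl a h
    · exact X.irrefl a h
  label := Sum.elim C.label X.label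

def compAdj (G : LGraph) (H : G.V → LGraph) :
    (Σ v : G.V, (H v).V) → (Σ v : G.V, (H v).V) → Prop := fun x y =>
  (∃ (v : G.V) (a b : (H v).V), x = ⟨v, a⟩ ∧ y = ⟨v, b⟩ ∧ (H v).adj a b) ∨
    (x.1 ≠ y.1 ∧ G.adj x.1 y.1)

/-- The composition `G⟨H v₁, …, H vₙ⟩` of the family `H` via the graph `G`:
replace each vertex `v` of `G` by the graph `H v`. -/
def comp (G : LGraph) (H : G.V → LGraph) : LGraph where
  V := Σ v : G.V, (H v).V
  adj := compAdj G H
  symm := by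
    rintro x y (⟨v, a, b, hx, hy, hab⟩ | ⟨hne, hadj⟩)
    · exact Or.inl ⟨v, b, a, hy, hx, (H v).symm hab⟩
    · exact Or.inr ⟨hne.symm, G.symm hadj⟩
  irrefl := by
    rintro ⟨v, a⟩ (⟨w, x, y, hx, hy, hxy⟩ | ⟨hne, _⟩)
    · have h := hx.symm.trans hy
      obtain rfl : x = y := by simpa using h
      exact (H w).irrefl x hxy
    · exact hne rfl
  label x := (H x.1).label x.2

/-- A module of `G` : a set `M` of vertices such that every vertex outside `M`
is adjacent either to all vertices of `M` or to none of them. -/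
def IsModule (G : LGraph) (M : Set G.V) : Prop :=
  ∀ v ∉ M, ∀ x ∈ M, ∀ y ∈ M, (G.adj v x ↔ G.adj v y)

/-- A prime graph: at least 2 vertices and only trivial modules. -/
def Prime (G : LGraph) : Prop :=
  2 ≤ Fintype.card G.V ∧
    ∀ M : Set G.V, G.IsModule M → M = ∅ ∨ (∃ v, M = {v}) ∨ M = Set.univ

/-- `G` is `P₄`-free: no four distinct vertices induce a path on 4 vertices. -/
def P4Free (G : LGraph) : Prop :=
  ¬ ∃ v₁ v₂ v₃ v₄ : G.V,
      v₁ ≠ v₂ ∧ v₁ ≠ v₃ ∧ v₁ ≠ v₄ ∧ v₂ ≠ v₃ ∧ v₂ ≠ v₄ ∧ v₃ ≠ v₄ ∧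
      G.adj v₁ v₂ ∧ G.adj v₂ v₃ ∧ G.adj v₃ v₄ ∧
      ¬ G.adj v₁ v₃ ∧ ¬ G.adj v₁ v₄ ∧ ¬ G.adj v₂ v₄

end LGraph

open LGraph

/-- The `n`-fold tensor `X₁ ⊗ ⋯ ⊗ Xₙ`. -/
def bigTensor : (n : ℕ) → (Fin n → LGraph) → LGraph
  | 0, _ => LGraph.empty
  | n + 1, F => (F 0).tensor (bigTensor n fun i => F i.succ)

/-- The `n`-fold par `X₁ ⅋ ⋯ ⅋ Xₙ`. -/
def bigPar : (n : ℕ) → (Fin n → LGraph) → LGraph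
  | 0, _ => LGraph.empty
  | n + 1, F => (F 0).par (bigPar n fun i => F i.succ)

/-- The inference rules of system GS (premise, conclusion). -/
inductive GSRule : LGraph → LGraph → Prop
  /-- ai↓ : premise `∅`, conclusion `ā ⅋ a`. -/
  | ai (a : Atom) : GSRule LGraph.empty ((single (dualAtom a)).par (single a))
  /-- ss↓ : premise `B[A]_S`, conclusion `B ⅋ A`, for `A ≠ ∅` and `S ≠ ∅`. -/
  | ss (A B : LGraph) (S : Set B.V) :
      Nonempty A.V → S ≠ ∅ → GSRule (B.plug S A) (B.par A)
  /-- p↓ : premise `(M₁ ⅋ N₁) ⊗ ⋯ ⊗ (Mₙ ⅋ Nₙ)`, conclusion `P̄⟨M₁,…,Mₙ⟩ ⅋ P⟨N₁,…,Nₙ⟩`,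
  for `P` prime with `n = |V(P)| ≥ 4` and all `Mᵢ ≠ ∅`. -/
  | p (n : ℕ) (P : LGraph) (e : P.V ≃ Fin n) (M N : Fin n → LGraph) :
      P.Prime → 4 ≤ n → (∀ i, Nonempty (M i).V) →
      GSRule (bigTensor n fun i => (M i).par (N i))
        ((P.dual.comp fun v => M (e v)).par (P.comp fun v => N (e v)))

/-- The "up" rules ai↑, ss↑, p↑ (premise, conclusion). -/
inductive UpRule : LGraph → LGraph → Prop
  /-- ai↑ : premise `a ⊗ ā`, conclusion `∅`. -/
  | ai (a : Atom) : UpRule ((single a).tensor (single (dualAtom a))) LGraph.empty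
  /-- ss↑ : premise `B ⊗ A`, conclusion `B[A]_S`, for `A ≠ ∅` and `S ≠ V(B)`. -/
  | ss (A B : LGraph) (S : Set B.V) :
      Nonempty A.V → S ≠ Set.univ → UpRule (B.tensor A) (B.plug S A)
  /-- p↑ : premise `P⟨M₁,…,Mₙ⟩ ⊗ P̄⟨N₁,…,Nₙ⟩`, conclusion `(M₁ ⊗ N₁) ⅋ ⋯ ⅋ (Mₙ ⊗ Nₙ)`,
  for `P` prime with `n = |V(P)| ≥ 4` and all `Mᵢ ≠ ∅`. -/
  | p (n : ℕ) (P : LGraph) (e : P.V ≃ Fin n) (M N : Fin n → LGraph) :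
      P.Prime → 4 ≤ n → (∀ i, Nonempty (M i).V) →
      UpRule ((P.comp fun v => M (e v)).tensor (P.dual.comp fun v => N (e v)))
        (bigPar n fun i => (M i).tensor (N i))

/-- The rules of system SGS : the rules of GS together with their duals. -/
def SGSRule (G H : LGraph) : Prop := GSRule G H ∨ UpRule G H

/-- A single inference step in a system: inside some context, replace a module
isomorphic to the premise of a rule by the corresponding conclusion. -/
def Step (Rules : LGraph → LGraph → Prop) (G H : LGraph) : Prop :=
  ∃ (C : LGraph) (R : Set C.V) (p c : LGraph),
    Rules p c ∧ G.iso (C.plug R p) ∧ H.iso (C.plug R c)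

/-- A derivation in a system from `G` to `H` : a finite sequence of inference steps
and isomorphisms leading from `G` to `H`. -/
def Deriv (Rules : LGraph → LGraph → Prop) (G H : LGraph) : Prop :=
  Relation.ReflTransGen (fun X Y => X.iso Y ∨ Step Rules X Y) G H

/-- A graph is provable in a system if there is a derivation from `∅` to it. -/
def Provable (Rules : LGraph → LGraph → Prop) (G : LGraph) : Prop :=
  Deriv Rules LGraph.empty G

/-- Formulas: unit, positive and negative atoms, par and tensor. -/
inductive Formula where
  | unit : Formula
  | pos (a : ℕ) : Formula
  | neg (a : ℕ) : Formula
  | par (φ ψ : Formula) : Formula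
  | tens (φ ψ : Formula) : Formula

/-- The graph `[φ]` of a formula `φ`. -/
def Formula.graph : Formula → LGraph
  | .unit => LGraph.empty
  | .pos a => single (a, true)
  | .neg a => single (a, false)
  | .par φ ψ => φ.graph.par ψ.graph
  | .tens φ ψ => φ.graph.tensor ψ.graph

/-- Structural equivalence of formulas: the smallest congruence making `⅋` and `⊗`
associative and commutative with unit `∘`. -/
inductive Formula.equiv : Formula → Formula → Prop
  | refl (φ) : Formula.equiv φ φ
  | symm {φ ψ} : Formula.equiv φ ψ → Formula.equiv ψ φ
  | trans {φ ψ χ} : Formula.equiv φ ψ → Formula.equiv ψ χ → Formula.equiv φ χ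
  | parComm (φ ψ) : Formula.equiv (.par φ ψ) (.par ψ φ)
  | parAssoc (φ ψ χ) : Formula.equiv (.par φ (.par ψ χ)) (.par (.par φ ψ) χ)
  | parUnit (φ) : Formula.equiv (.par φ .unit) φ
  | tensComm (φ ψ) : Formula.equiv (.tens φ ψ) (.tens ψ φ)
  | tensAssoc (φ ψ χ) : Formula.equiv (.tens φ (.tens ψ χ)) (.tens (.tens φ ψ) χ)
  | tensUnit (φ) : Formula.equiv (.tens φ .unit) φ
  | parCongr {φ φ' ψ ψ'} : Formula.equiv φ φ' → Formula.equiv ψ ψ' →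
      Formula.equiv (.par φ ψ) (.par φ' ψ')
  | tensCongr {φ φ' ψ ψ'} : Formula.equiv φ φ' → Formula.equiv ψ ψ' →
      Formula.equiv (.tens φ ψ) (.tens φ' ψ')

/-- A formula is unit-free if it contains no occurrence of the unit `∘`. -/
def Formula.UnitFree : Formula → Prop
  | .unit => False
  | .pos _ => True
  | .neg _ => True
  | .par φ ψ => φ.UnitFree ∧ ψ.UnitFree
  | .tens φ ψ => φ.UnitFree ∧ ψ.UnitFree

/-- The sequent calculus MLL° (multiplicative linear logic with mix) on multisets
of formulas. -/
inductive MLL : Multiset Formula → Prop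
  | ax (a : ℕ) : MLL {Formula.pos a, Formula.neg a}
  | tens {Γ Δ : Multiset Formula} (φ ψ : Formula) :
      MLL (φ ::ₘ Γ) → MLL (ψ ::ₘ Δ) → MLL (Formula.tens φ ψ ::ₘ (Γ + Δ))
  | par {Γ : Multiset Formula} (φ ψ : Formula) :
      MLL (φ ::ₘ ψ ::ₘ Γ) → MLL (Formula.par φ ψ ::ₘ Γ)
  | mix {Γ Δ : Multiset Formula} : MLL Γ → MLL Δ → MLL (Γ + Δ)

/-! ### Auxiliary material for Statement 0 -/

namespace LGraph

def Iso.refl (G : LGraph) : Iso G G :=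
  ⟨Equiv.refl _, fun _ _ => Iff.rfl, fun _ => rfl⟩

def Iso.symm {G H : LGraph} (f : Iso G H) : Iso H G where
  toEquiv := f.toEquiv.symm
  adj_iff v w := by
    have := f.adj_iff (f.toEquiv.symm v) (f.toEquiv.symm w)
    simpa using this.symm
  label_eq v := by
    have := f.label_eq (f.toEquiv.symm v)
    simpa using this.symm

def Iso.trans {G H K : LGraph} (f : Iso G H) (g : Iso H K) : Iso G K where
  toEquiv := f.toEquiv.trans g.toEquiv
  adj_iff v w := (f.adj_iff v w).trans (g.adj_iff _ _)
  label_eq v := (g.label_eq _).trans (f.label_eq v)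

theorem iso_refl (G : LGraph) : G.iso G := ⟨Iso.refl G⟩

theorem iso_symm {G H : LGraph} (h : G.iso H) : H.iso G := h.elim fun f => ⟨f.symm⟩

theorem iso_trans {G H K : LGraph} (h : G.iso H) (h' : H.iso K) : G.iso K :=
  h.elim fun f => h'.elim fun g => ⟨f.trans g⟩

def Iso.parCongr {G G' H H' : LGraph} (f : Iso G G') (g : Iso H H') :
    Iso (G.par H) (G'.par H') where
  toEquiv := Equiv.sumCongr f.toEquiv g.toEquiv
  adj_iff v w := by
    cases v <;> cases w <;>
      simp only [par, parAdj, Equiv.sumCongr_apply, Sum.map_inl, Sum.map_inr] <;>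
      first | exact f.adj_iff _ _ | exact g.adj_iff _ _ | exact Iff.rfl
  label_eq v := by
    cases v <;>
      simp only [par, Equiv.sumCongr_apply, Sum.map_inl, Sum.map_inr, Sum.elim_inl,
        Sum.elim_inr] <;> first | exact f.label_eq _ | exact g.label_eq _

def Iso.tensorCongr {G G' H H' : LGraph} (f : Iso G G') (g : Iso H H') :
    Iso (G.tensor H) (G'.tensor H') where
  toEquiv := Equiv.sumCongr f.toEquiv g.toEquiv
  adj_iff v w := by
    cases v <;> cases w <;>
      simp only [tensor, tensorAdj, Equiv.sumCongr_apply, Sum.map_inl, Sum.map_inr] <;>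
      first | exact f.adj_iff _ _ | exact g.adj_iff _ _ | exact Iff.rfl
  label_eq v := by
    cases v <;>
      simp only [tensor, Equiv.sumCongr_apply, Sum.map_inl, Sum.map_inr, Sum.elim_inl,
        Sum.elim_inr] <;> first | exact f.label_eq _ | exact g.label_eq _

def Iso.parComm (G H : LGraph) : Iso (G.par H) (H.par G) where
  toEquiv := Equiv.sumComm _ _
  adj_iff v w := by cases v <;> cases w <;> exact Iff.rfl
  label_eq v := by cases v <;> rfl

def Iso.tensorComm (G H : LGraph) : Iso (G.tensor H) (H.tensor G) where
  toEquiv := Equiv.sumComm _ _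
  adj_iff v w := by cases v <;> cases w <;> exact Iff.rfl
  label_eq v := by cases v <;> rfl

def Iso.parAssoc (G H K : LGraph) : Iso (G.par (H.par K)) ((G.par H).par K) where
  toEquiv := (Equiv.sumAssoc _ _ _).symm
  adj_iff v w := by
    rcases v with v | (v | v) <;> rcases w with w | (w | w) <;> exact Iff.rfl
  label_eq v := by rcases v with v | (v | v) <;> rfl

def Iso.tensorAssoc (G H K : LGraph) :
    Iso (G.tensor (H.tensor K)) ((G.tensor H).tensor K) where
  toEquiv := (Equiv.sumAssoc _ _ _).symm
  adj_iff v w := by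
    rcases v with v | (v | v) <;> rcases w with w | (w | w) <;> exact Iff.rfl
  label_eq v := by rcases v with v | (v | v) <;> rfl

def Iso.parUnit (G : LGraph) : Iso (G.par empty) G where
  toEquiv := Equiv.sumEmpty G.V Empty
  adj_iff v w := by
    rcases v with v | v
    · rcases w with w | w
      · exact Iff.rfl
      · exact w.elim
    · exact v.elim
  label_eq v := by cases v with | inl v => rfl | inr v => exact v.elim

def Iso.tensorUnit (G : LGraph) : Iso (G.tensor empty) G where
  toEquiv := Equiv.sumEmpty G.V Empty
  adj_iff v w := by
    rcases v with v | v
    · rcases w with w | w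
      · exact Iff.rfl
      · exact w.elim
    · exact v.elim
  label_eq v := by cases v with | inl v => rfl | inr v => exact v.elim

end LGraph

/-- Forward direction: structurally equivalent formulas have isomorphic graphs. -/
theorem Formula.equiv.graph_iso {φ ψ : Formula} (h : φ.equiv ψ) :
    φ.graph.iso ψ.graph := by
  induction h with
  | refl φ => exact LGraph.iso_refl _
  | symm _ ih => exact LGraph.iso_symm ih
  | trans _ _ ih₁ ih₂ => exact LGraph.iso_trans ih₁ ih₂
  | parComm φ ψ => exact ⟨LGraph.Iso.parComm _ _⟩
  | parAssoc φ ψ χ => exact ⟨LGraph.Iso.parAssoc _ _ _⟩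
  | parUnit φ => exact ⟨LGraph.Iso.parUnit _⟩
  | tensComm φ ψ => exact ⟨LGraph.Iso.tensorComm _ _⟩
  | tensAssoc φ ψ χ => exact ⟨LGraph.Iso.tensorAssoc _ _ _⟩
  | tensUnit φ => exact ⟨LGraph.Iso.tensorUnit _⟩
  | parCongr _ _ ih₁ ih₂ =>
      exact ih₁.elim fun f => ih₂.elim fun g => ⟨f.parCongr g⟩
  | tensCongr _ _ ih₁ ih₂ =>
      exact ih₁.elim fun f => ih₂.elim fun g => ⟨f.tensorCongr g⟩

namespace LGraph

def Iso.dualCongr {G H : LGraph} (f : Iso G H) : Iso G.dual H.dual where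
  toEquiv := f.toEquiv
  adj_iff v w := by
    constructor
    · rintro ⟨hne, hadj⟩
      exact ⟨fun e => hne (f.toEquiv.injective e), fun h => hadj ((f.adj_iff v w).mpr h)⟩
    · rintro ⟨hne, hadj⟩
      exact ⟨fun e => hne (congrArg f.toEquiv e), fun h => hadj ((f.adj_iff v w).mp h)⟩
  label_eq v := congrArg dualAtom (f.label_eq v)

def Iso.dualPar (G H : LGraph) : Iso (G.par H).dual (G.dual.tensor H.dual) where
  toEquiv := Equiv.refl _
  adj_iff v w := by
    cases v <;> cases w <;>
      simp [dual, par, tensor, parAdj, tensorAdj, Sum.inl.injEq, Sum.inr.injEq] <;>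
      first | exact Iff.rfl | tauto
  label_eq v := by cases v <;> rfl

def Iso.dualTensor (G H : LGraph) : Iso (G.tensor H).dual (G.dual.par H.dual) where
  toEquiv := Equiv.refl _
  adj_iff v w := by
    cases v <;> cases w <;>
      simp [dual, par, tensor, parAdj, tensorAdj, Sum.inl.injEq, Sum.inr.injEq] <;>
      first | exact Iff.rfl | tauto
  label_eq v := by cases v <;> rfl

def Iso.dualEmpty : Iso empty.dual empty where
  toEquiv := Equiv.refl _
  adj_iff v _ := v.elim
  label_eq v := v.elim

def Iso.dualSingle (a : Atom) : Iso (single a).dual (single (dualAtom a)) where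
  toEquiv := Equiv.refl _
  adj_iff v w := by
    simp only [dual, single]
    constructor
    · rintro ⟨hne, -⟩; exact hne rfl
    · exact fun h => h.elim
  label_eq _ := rfl

/-- Reachability in a graph. -/
def Reach (G : LGraph) : G.V → G.V → Prop := Relation.ReflTransGen G.adj

theorem Iso.reach {G H : LGraph} (f : Iso G H) {v w : G.V} (h : G.Reach v w) :
    H.Reach (f.toEquiv v) (f.toEquiv w) :=
  Relation.ReflTransGen.lift f.toEquiv (fun a b hab => (f.adj_iff a b).mp hab) _ _ h

theorem reach_par_inl {G H : LGraph} {a b : G.V} (h : G.Reach a b) :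
    (G.par H).Reach (Sum.inl a) (Sum.inl b) :=
  Relation.ReflTransGen.lift Sum.inl (fun _ _ hab => hab) _ _ h

theorem reach_par_inr {G H : LGraph} {a b : H.V} (h : H.Reach a b) :
    (G.par H).Reach (Sum.inr a) (Sum.inr b) :=
  Relation.ReflTransGen.lift Sum.inr (fun _ _ hab => hab) _ _ h

theorem reach_par_cases {G H : LGraph} {x y : (G.par H).V}
    (h : (G.par H).Reach x y) :
    (∃ a b, x = Sum.inl a ∧ y = Sum.inl b ∧ G.Reach a b) ∨
      (∃ a b, x = Sum.inr a ∧ y = Sum.inr b ∧ H.Reach a b) := by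
  induction h with
  | refl =>
      rcases x with a | a
      · exact Or.inl ⟨a, a, rfl, rfl, Relation.ReflTransGen.refl⟩
      · exact Or.inr ⟨a, a, rfl, rfl, Relation.ReflTransGen.refl⟩
  | @tail y z _ hstep ih =>
      rcases ih with ⟨a, b, hx, hy, hr⟩ | ⟨a, b, hx, hy, hr⟩
      · subst hx; subst hy
        rcases z with c | c
        · exact Or.inl ⟨a, c, rfl, rfl, hr.tail hstep⟩
        · exact hstep.elim
      · subst hx; subst hy
        rcases z with c | c
        · exact hstep.elim
        · exact Or.inr ⟨a, c, rfl, rfl, hr.tail hstep⟩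

/-- Connectedness of a graph. -/
def Conn (G : LGraph) : Prop := Nonempty G.V ∧ ∀ v w : G.V, G.Reach v w

theorem conn_single (a : Atom) : (single a).Conn :=
  ⟨⟨()⟩, fun _ _ => Relation.ReflTransGen.refl⟩

theorem conn_tensor {G H : LGraph} (hG : Nonempty G.V) (hH : Nonempty H.V) :
    (G.tensor H).Conn := by
  refine ⟨⟨Sum.inl hG.some⟩, fun v w => ?_⟩
  have cross : ∀ (a : G.V) (b : H.V), (G.tensor H).Reach (Sum.inl a) (Sum.inr b) :=
    fun a b => Relation.ReflTransGen.single trivial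
  have cross' : ∀ (a : H.V) (b : G.V), (G.tensor H).Reach (Sum.inr a) (Sum.inl b) :=
    fun a b => Relation.ReflTransGen.single trivial
  rcases v with a | a <;> rcases w with b | b
  · exact (cross a hH.some).trans (cross' hH.some b)
  · exact cross a b
  · exact cross' a b
  · exact (cross' a hG.some).trans (cross hG.some b)

end LGraph

open LGraph

/-- Negation of formulas. -/
def Formula.negf : Formula → Formula
  | .unit => .unit
  | .pos a => .neg a
  | .neg a => .pos a
  | .par φ ψ => .tens φ.negf ψ.negf
  | .tens φ ψ => .par φ.negf ψ.negf

theorem Formula.negf_negf : ∀ φ : Formula, φ.negf.negf = φ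
  | .unit => rfl
  | .pos _ => rfl
  | .neg _ => rfl
  | .par φ ψ => by simp [Formula.negf, negf_negf φ, negf_negf ψ]
  | .tens φ ψ => by simp [Formula.negf, negf_negf φ, negf_negf ψ]

theorem Formula.equiv.negf {φ ψ : Formula} (h : φ.equiv ψ) :
    φ.negf.equiv ψ.negf := by
  induction h with
  | refl φ => exact .refl _
  | symm _ ih => exact ih.symm
  | trans _ _ ih₁ ih₂ => exact ih₁.trans ih₂
  | parComm φ ψ => exact .tensComm _ _
  | parAssoc φ ψ χ => exact .tensAssoc _ _ _
  | parUnit φ => exact .tensUnit _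
  | tensComm φ ψ => exact .parComm _ _
  | tensAssoc φ ψ χ => exact .parAssoc _ _ _
  | tensUnit φ => exact .parUnit _
  | parCongr _ _ ih₁ ih₂ => exact .tensCongr ih₁ ih₂
  | tensCongr _ _ ih₁ ih₂ => exact .parCongr ih₁ ih₂

theorem Formula.graph_negf : ∀ φ : Formula, φ.negf.graph.iso φ.graph.dual
  | .unit => ⟨Iso.dualEmpty.symm⟩
  | .pos a => ⟨Iso.dualSingle (a, true) |>.symm⟩
  | .neg a => by
      have : dualAtom (a, false) = (a, true) := rfl
      exact ⟨(this ▸ Iso.dualSingle (a, false)).symm⟩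
  | .par φ ψ => by
      have h₁ := Formula.graph_negf φ
      have h₂ := Formula.graph_negf ψ
      rcases h₁ with ⟨f⟩; rcases h₂ with ⟨g⟩
      exact ⟨(f.tensorCongr g).trans (Iso.dualPar _ _).symm⟩
  | .tens φ ψ => by
      have h₁ := Formula.graph_negf φ
      have h₂ := Formula.graph_negf ψ
      rcases h₁ with ⟨f⟩; rcases h₂ with ⟨g⟩
      exact ⟨(f.parCongr g).trans (Iso.dualTensor _ _).symm⟩

/-- Iterated par of a list of formulas. -/
def listPar : List Formula → Formula
  | [] => .unit
  | a :: t => .par a (listPar t)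

/-- The par-components of a formula. -/
def parts : Formula → List Formula
  | .unit => []
  | .par a b => parts a ++ parts b
  | f => [f]

theorem equiv_listPar_append (l₁ l₂ : List Formula) :
    (listPar (l₁ ++ l₂)).equiv (.par (listPar l₁) (listPar l₂)) := by
  induction l₁ with
  | nil =>
      exact ((Formula.equiv.parComm Formula.unit (listPar l₂)).trans
        (Formula.equiv.parUnit _)).symm
  | cons a t ih =>
      exact (Formula.equiv.parCongr (.refl a) ih).trans
        (Formula.equiv.parAssoc _ _ _)

theorem equiv_parts : ∀ φ : Formula, φ.equiv (listPar (parts φ))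
  | .unit => .refl _
  | .pos a => (Formula.equiv.parUnit _).symm
  | .neg a => (Formula.equiv.parUnit _).symm
  | .par φ ψ =>
      (Formula.equiv.parCongr (equiv_parts φ) (equiv_parts ψ)).trans
        (equiv_listPar_append (parts φ) (parts ψ)).symm
  | .tens φ ψ => (Formula.equiv.parUnit _).symm

theorem parts_shape : ∀ (φ : Formula), ∀ x ∈ parts φ,
    (∃ a, x = .pos a) ∨ (∃ a, x = .neg a) ∨ (∃ a b, x = Formula.tens a b)
  | .unit => by simp [parts]
  | .pos a => by
      intro x hx
      simp [parts] at hx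
      exact Or.inl ⟨a, hx⟩
  | .neg a => by
      intro x hx
      simp [parts] at hx
      exact Or.inr (Or.inl ⟨a, hx⟩)
  | .par φ ψ => by
      intro x hx
      simp only [parts, List.mem_append] at hx
      rcases hx with hx | hx
      · exact parts_shape φ x hx
      · exact parts_shape ψ x hx
  | .tens φ ψ => by
      intro x hx
      simp [parts] at hx
      exact Or.inr (Or.inr ⟨φ, ψ, hx⟩)

theorem parts_unitFree : ∀ (φ : Formula), φ.UnitFree → ∀ x ∈ parts φ, x.UnitFree
  | .unit => by simp [parts]
  | .pos a => by intro h x hx; simp [parts] at hx; subst hx; trivial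
  | .neg a => by intro h x hx; simp [parts] at hx; subst hx; trivial
  | .par φ ψ => by
      intro h x hx
      simp only [parts, List.mem_append] at hx
      rcases hx with hx | hx
      · exact parts_unitFree φ h.1 x hx
      · exact parts_unitFree ψ h.2 x hx
  | .tens φ ψ => by intro h x hx; simp [parts] at hx; subst hx; exact h

/-- Size of a formula. -/
def fsize : Formula → ℕ
  | .unit => 1
  | .pos _ => 1
  | .neg _ => 1
  | .par φ ψ => fsize φ + fsize ψ + 1
  | .tens φ ψ => fsize φ + fsize ψ + 1

theorem fsize_pos (φ : Formula) : 0 < fsize φ := by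
  cases φ <;> simp [fsize]

theorem fsize_negf : ∀ φ : Formula, fsize φ.negf = fsize φ
  | .unit => rfl
  | .pos _ => rfl
  | .neg _ => rfl
  | .par φ ψ => by simp [Formula.negf, fsize, fsize_negf φ, fsize_negf ψ]
  | .tens φ ψ => by simp [Formula.negf, fsize, fsize_negf φ, fsize_negf ψ]

theorem fsize_parts_le : ∀ (φ : Formula), ∀ x ∈ parts φ, fsize x ≤ fsize φ
  | .unit => by simp [parts]
  | .pos a => by intro x hx; simp [parts] at hx; subst hx; exact le_rfl
  | .neg a => by intro x hx; simp [parts] at hx; subst hx; exact le_rfl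
  | .par φ ψ => by
      intro x hx
      simp only [parts, List.mem_append] at hx
      rcases hx with hx | hx
      · calc fsize x ≤ fsize φ := fsize_parts_le φ x hx
          _ ≤ fsize (Formula.par φ ψ) := by simp [fsize]; omega
      · calc fsize x ≤ fsize ψ := fsize_parts_le ψ x hx
          _ ≤ fsize (Formula.par φ ψ) := by simp [fsize]; omega
  | .tens φ ψ => by intro x hx; simp [parts] at hx; subst hx; exact le_rfl

theorem fsize_parts_lt_par (φ ψ : Formula) :
    ∀ x ∈ parts (Formula.par φ ψ), fsize x < fsize (Formula.par φ ψ) := by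
  intro x hx
  simp only [parts, List.mem_append] at hx
  have h1 := fsize_pos φ
  have h2 := fsize_pos ψ
  rcases hx with hx | hx
  · have := fsize_parts_le φ x hx; simp [fsize]; omega
  · have := fsize_parts_le ψ x hx; simp [fsize]; omega

theorem unitFree_nonempty : ∀ φ : Formula, φ.UnitFree → Nonempty φ.graph.V
  | .unit => by intro h; exact h.elim
  | .pos a => fun _ => ⟨()⟩
  | .neg a => fun _ => ⟨()⟩
  | .par φ ψ => fun h => ⟨Sum.inl (unitFree_nonempty φ h.1).some⟩
  | .tens φ ψ => fun h => ⟨Sum.inl (unitFree_nonempty φ h.1).some⟩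

theorem unitFree_negf : ∀ φ : Formula, φ.UnitFree → φ.negf.UnitFree
  | .unit => fun h => h.elim
  | .pos _ => fun _ => trivial
  | .neg _ => fun _ => trivial
  | .par φ ψ => fun h => ⟨unitFree_negf φ h.1, unitFree_negf ψ h.2⟩
  | .tens φ ψ => fun h => ⟨unitFree_negf φ h.1, unitFree_negf ψ h.2⟩

theorem parts_conn (φ : Formula) (hf : φ.UnitFree) :
    ∀ x ∈ parts φ, x.graph.Conn := by
  intro x hx
  have hufree := parts_unitFree φ hf x hx
  rcases parts_shape φ x hx with ⟨a, rfl⟩ | ⟨a, rfl⟩ | ⟨a, b, rfl⟩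
  · exact conn_single _
  · exact conn_single _
  · exact conn_tensor (unitFree_nonempty a hufree.1) (unitFree_nonempty b hufree.2)

theorem equiv_listPar_perm {l l' : List Formula} (h : l.Perm l') :
    (listPar l).equiv (listPar l') := by
  induction h with
  | nil => exact .refl _
  | cons a _ ih => exact .parCongr (.refl a) ih
  | swap a b t =>
      exact (Formula.equiv.parAssoc _ _ _).trans
        ((Formula.equiv.parCongr (Formula.equiv.parComm b a) (.refl (listPar t))).trans
          (Formula.equiv.parAssoc _ _ _).symm)
  | trans _ _ ih₁ ih₂ => exact ih₁.trans ih₂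

namespace LGraph

theorem reach_inl_iff_isLeft {G H : LGraph} (hG : G.Conn) (v0 : G.V) (w : (G.par H).V) :
    (G.par H).Reach (Sum.inl v0) w ↔ w.isLeft = true := by
  constructor
  · intro h
    rcases reach_par_cases h with ⟨p, q, hp, hq, _⟩ | ⟨p, q, hp, _, _⟩
    · rw [hq]; rfl
    · exact absurd hp (by simp)
  · intro h
    rcases w with b | b
    · exact reach_par_inl (hG.2 v0 b)
    · simp at h

theorem Iso.reach_iff {G H : LGraph} (f : Iso G H) (v w : G.V) :
    G.Reach v w ↔ H.Reach (f.toEquiv v) (f.toEquiv w) := by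
  constructor
  · exact f.reach
  · intro h
    have h2 := f.symm.reach h
    have e : f.symm.toEquiv = f.toEquiv.symm := rfl
    rw [e] at h2
    simpa using h2

def Iso.splitL {G H G' H' : LGraph} (f : Iso (G.par H) (G'.par H'))
    (hf : ∀ v, ((f.toEquiv v).isLeft = true) ↔ (v.isLeft = true)) : Iso G G' where
  toEquiv :=
    { toFun := fun v => (f.toEquiv (Sum.inl v)).getLeft ((hf _).mpr rfl)
      invFun := fun v => (f.toEquiv.symm (Sum.inl v)).getLeft (by
        have h := hf (f.toEquiv.symm (Sum.inl v))
        exact h.mp ((congrArg Sum.isLeft (f.toEquiv.apply_symm_apply (Sum.inl v))).trans rfl))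
      left_inv := fun v => Sum.inl_injective (by
        exact (Sum.inl_getLeft _ _).trans ((congrArg f.toEquiv.symm (Sum.inl_getLeft _ _)).trans
          (f.toEquiv.symm_apply_apply _)))
      right_inv := fun v => Sum.inl_injective (by
        exact (Sum.inl_getLeft _ _).trans ((congrArg f.toEquiv (Sum.inl_getLeft _ _)).trans
          (f.toEquiv.apply_symm_apply _))) }
  adj_iff := by
    intro v w
    have h1 := f.adj_iff (Sum.inl v) (Sum.inl w)
    rw [← Sum.inl_getLeft (f.toEquiv (Sum.inl v)) ((hf _).mpr rfl),
        ← Sum.inl_getLeft (f.toEquiv (Sum.inl w)) ((hf _).mpr rfl)] at h1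
    exact h1
  label_eq := by
    intro v
    have h1 := f.label_eq (Sum.inl v)
    rw [← Sum.inl_getLeft (f.toEquiv (Sum.inl v)) ((hf _).mpr rfl)] at h1
    exact h1

def Iso.splitR {G H G' H' : LGraph} (f : Iso (G.par H) (G'.par H'))
    (hf : ∀ v, ((f.toEquiv v).isLeft = true) ↔ (v.isLeft = true)) : Iso H H' :=
  Iso.splitL ((Iso.parComm H G).trans (f.trans (Iso.parComm G' H'))) (by
    intro v
    rcases v with p | p
    · have e : (((Iso.parComm H G).trans (f.trans (Iso.parComm G' H'))).toEquiv
          (Sum.inl p)) = Equiv.sumComm G'.V H'.V (f.toEquiv (Sum.inr p)) := rfl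
      rw [e]
      have h1 := hf (Sum.inr p)
      rcases hq : f.toEquiv (Sum.inr p) with q | q
      · rw [hq] at h1; simp at h1
      · simp
    · have e : (((Iso.parComm H G).trans (f.trans (Iso.parComm G' H'))).toEquiv
          (Sum.inr p)) = Equiv.sumComm G'.V H'.V (f.toEquiv (Sum.inl p)) := rfl
      rw [e]
      have h1 := hf (Sum.inl p)
      rcases hq : f.toEquiv (Sum.inl p) with q | q
      · simp
      · rw [hq] at h1; simp at h1)

end LGraph

/-- Extraction of the connected component of a vertex from an iterated par. -/
theorem extract : ∀ (L : List Formula), (∀ x ∈ L, x.graph.Conn) →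
    ∀ v : (listPar L).graph.V,
    ∃ (b : Formula) (L' : List Formula), L.Perm (b :: L') ∧
      ∃ g : Iso (listPar L).graph (b.graph.par (listPar L').graph),
        ∀ w, ((g.toEquiv w).isLeft = true) ↔ (listPar L).graph.Reach v w := by
  intro L
  induction L with
  | nil => intro _ v; exact v.elim
  | cons a t ih =>
    intro hconn v
    have hca : a.graph.Conn := hconn a List.mem_cons_self
    rcases v with x | x
    · exact ⟨a, t, List.Perm.refl _, Iso.refl _,
        fun w => (reach_inl_iff_isLeft hca x w).symm⟩
    · obtain ⟨b, t', hperm, g', hg'⟩ :=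
        ih (fun y hy => hconn y (List.mem_cons_of_mem _ hy)) x
      refine ⟨b, a :: t', (hperm.cons a).trans (List.Perm.swap b a t'), ?_⟩
      let T := (listPar t).graph
      let T' := (listPar t').graph
      let g₁ : Iso (a.graph.par T) (a.graph.par (b.graph.par T')) :=
        Iso.parCongr (Iso.refl a.graph) g'
      let g₂ : Iso (a.graph.par (b.graph.par T')) (b.graph.par (a.graph.par T')) :=
        ((Iso.parAssoc a.graph b.graph T').trans
          (Iso.parCongr (Iso.parComm a.graph b.graph) (Iso.refl T'))).trans
          (Iso.parAssoc b.graph a.graph T').symm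
      refine ⟨g₁.trans g₂, fun w => ?_⟩
      rcases w with u | z
      · show Sum.isLeft (Sum.inr (Sum.inl u) : b.graph.V ⊕ (a.graph.V ⊕ T'.V)) = true ↔
          (a.graph.par T).Reach (Sum.inr x) (Sum.inl u)
        simp only [Sum.isLeft_inr]
        constructor
        · intro hfalse; exact absurd hfalse (by simp)
        · intro h
          exfalso
          rcases reach_par_cases (G := a.graph) (H := T) h with
            ⟨p, q, hp, hq, _⟩ | ⟨p, q, hp, hq, _⟩
          · exact absurd hp (by simp)
          · exact absurd hq (by simp)
      · show Sum.isLeft (g₂.toEquiv (Sum.inr (g'.toEquiv z))) = true ↔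
          (a.graph.par T).Reach (Sum.inr x) (Sum.inr z)
        constructor
        · intro hl
          rcases hq : g'.toEquiv z with p | q
          · have hr : T.Reach x z := (hg' z).mp (by rw [hq]; rfl)
            exact reach_par_inr hr
          · rw [hq] at hl
            exact absurd hl (by
              show ¬ (Sum.isLeft (Sum.inr (Sum.inr q) :
                b.graph.V ⊕ (a.graph.V ⊕ T'.V)) = true)
              simp)
        · intro hr
          have hTr : T.Reach x z := by
            rcases reach_par_cases (G := a.graph) (H := T) hr with
              ⟨p, q, hp, hq2, h3⟩ | ⟨p, q, hp, hq2, h3⟩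
            · exact absurd hp (by simp)
            · obtain rfl : x = p := Sum.inr.inj hp
              obtain rfl : z = q := Sum.inr.inj hq2
              exact h3
          have hl := (hg' z).mpr hTr
          rcases hq : g'.toEquiv z with p | q
          · show Sum.isLeft (g₂.toEquiv (Sum.inr (Sum.inl p))) = true
            rfl
          · rw [hq] at hl; simp at hl

/-- Component matching: isomorphic iterated pars of connected graphs are
structurally equivalent, given pointwise equivalence of isomorphic components. -/
theorem matching : ∀ (L1 : List Formula) (L2 : List Formula),
    (∀ x ∈ L1, x.graph.Conn) → (∀ x ∈ L2, x.graph.Conn) →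
    (∀ x ∈ L1, ∀ y ∈ L2, x.graph.iso y.graph → x.equiv y) →
    (listPar L1).graph.iso (listPar L2).graph →
    (listPar L1).equiv (listPar L2) := by
  intro L1
  induction L1 with
  | nil =>
    intro L2 _ hc2 _ hiso
    cases L2 with
    | nil => exact .refl _
    | cons b t =>
      exfalso
      rcases hiso with ⟨f⟩
      have hb : Nonempty b.graph.V := (hc2 b List.mem_cons_self).1
      exact (f.toEquiv.symm (Sum.inl hb.some)).elim
  | cons a t ih =>
    intro L2 hc1 hc2 hpt hiso
    rcases hiso with ⟨f⟩
    have hca : a.graph.Conn := hc1 a List.mem_cons_self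
    obtain ⟨v0⟩ := hca.1
    obtain ⟨b, t2, hperm, g, hg⟩ := extract L2 hc2 (f.toEquiv (Sum.inl v0))
    have hb2 : b ∈ L2 := hperm.mem_iff.mpr List.mem_cons_self
    have ht2 : ∀ y ∈ t2, y ∈ L2 := fun y hy =>
      hperm.mem_iff.mpr (List.mem_cons_of_mem _ hy)
    have hcond : ∀ w, (((f.trans g).toEquiv w).isLeft = true) ↔ (w.isLeft = true) := by
      intro w
      have e1 : (f.trans g).toEquiv w = g.toEquiv (f.toEquiv w) := rfl
      rw [e1, hg]
      have e2 := f.reach_iff (Sum.inl v0) w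
      rw [← e2]
      exact reach_inl_iff_isLeft hca v0 w
    have iso1 : a.graph.iso b.graph := ⟨(f.trans g).splitL hcond⟩
    have iso2 : (listPar t).graph.iso (listPar t2).graph := ⟨(f.trans g).splitR hcond⟩
    have eq1 : a.equiv b := hpt a List.mem_cons_self b hb2 iso1
    have eq2 : (listPar t).equiv (listPar t2) :=
      ih t2 (fun x hx => hc1 x (List.mem_cons_of_mem _ hx)) (fun y hy => hc2 y (ht2 y hy))
        (fun x hx y hy => hpt x (List.mem_cons_of_mem _ hx) y (ht2 y hy)) iso2
    exact (Formula.equiv.parCongr eq1 eq2).trans (equiv_listPar_perm hperm.symm)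

theorem iso_single_single {a b : Atom} (h : (single a).iso (single b)) : a = b := by
  rcases h with ⟨f⟩
  exact (f.label_eq ()).symm

theorem not_iso_single_tensor {a : Atom} {G H : LGraph} (hG : Nonempty G.V)
    (hH : Nonempty H.V) : ¬ (single a).iso (G.tensor H) := by
  rintro ⟨f⟩
  have h1 : f.toEquiv.symm (Sum.inl hG.some) = f.toEquiv.symm (Sum.inr hH.some) :=
    @Subsingleton.elim Unit _ _ _
  have h2 := f.toEquiv.symm.injective h1
  simp at h2

theorem iso_dual {G H : LGraph} (h : G.iso H) : G.dual.iso H.dual :=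
  h.elim fun f => ⟨f.dualCongr⟩

/-- Every formula is equivalent to the unit or to a unit-free formula. -/
theorem reduce : ∀ φ : Formula, φ.equiv .unit ∨ ∃ φ', φ'.UnitFree ∧ φ.equiv φ'
  | .unit => Or.inl (.refl _)
  | .pos a => Or.inr ⟨.pos a, trivial, .refl _⟩
  | .neg a => Or.inr ⟨.neg a, trivial, .refl _⟩
  | .par φ ψ =>
    match reduce φ, reduce ψ with
    | .inl h₁, .inl h₂ => Or.inl ((Formula.equiv.parCongr h₁ h₂).trans (.parUnit _))
    | .inl h₁, .inr ⟨ψ', u, h₂⟩ => Or.inr ⟨ψ', u,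
        (Formula.equiv.parCongr h₁ h₂).trans
          ((Formula.equiv.parComm _ _).trans (.parUnit _))⟩
    | .inr ⟨φ', u, h₁⟩, .inl h₂ => Or.inr ⟨φ', u,
        (Formula.equiv.parCongr h₁ h₂).trans (.parUnit _)⟩
    | .inr ⟨φ', u₁, h₁⟩, .inr ⟨ψ', u₂, h₂⟩ =>
        Or.inr ⟨.par φ' ψ', ⟨u₁, u₂⟩, Formula.equiv.parCongr h₁ h₂⟩
  | .tens φ ψ =>
    match reduce φ, reduce ψ with
    | .inl h₁, .inl h₂ => Or.inl ((Formula.equiv.tensCongr h₁ h₂).trans (.tensUnit _))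
    | .inl h₁, .inr ⟨ψ', u, h₂⟩ => Or.inr ⟨ψ', u,
        (Formula.equiv.tensCongr h₁ h₂).trans
          ((Formula.equiv.tensComm _ _).trans (.tensUnit _))⟩
    | .inr ⟨φ', u, h₁⟩, .inl h₂ => Or.inr ⟨φ', u,
        (Formula.equiv.tensCongr h₁ h₂).trans (.tensUnit _)⟩
    | .inr ⟨φ', u₁, h₁⟩, .inr ⟨ψ', u₂, h₂⟩ =>
        Or.inr ⟨.tens φ' ψ', ⟨u₁, u₂⟩, Formula.equiv.tensCongr h₁ h₂⟩

/-- The main lemma: unit-free formulas with isomorphic graphs are equivalent. -/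
theorem main_lemma : ∀ (n : ℕ) (φ ψ : Formula), fsize φ + fsize ψ ≤ n →
    φ.UnitFree → ψ.UnitFree → φ.graph.iso ψ.graph → φ.equiv ψ := by
  intro n
  induction n with
  | zero =>
    intro φ ψ hn _ _ _
    have := fsize_pos φ; have := fsize_pos ψ; omega
  | succ n ih =>
    intro φ ψ hn hφ hψ hiso
    have key : ∀ (α β : Formula), fsize α + fsize β ≤ n + 1 → α.UnitFree →
        β.UnitFree → α.graph.iso β.graph →
        ((∃ x y, α = Formula.par x y) ∨ (∃ x y, β = Formula.par x y)) →
        α.equiv β := by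
      intro α β hab hα hβ hiso' hpar
      have hbound : ∀ x ∈ parts α, ∀ y ∈ parts β, fsize x + fsize y ≤ n := by
        rcases hpar with ⟨x0, y0, rfl⟩ | ⟨x0, y0, rfl⟩
        · intro x hx y hy
          have h1 := fsize_parts_lt_par x0 y0 x hx
          have h2 := fsize_parts_le β y hy
          omega
        · intro x hx y hy
          have h1 := fsize_parts_le α x hx
          have h2 := fsize_parts_lt_par x0 y0 y hy
          omega
      have hg : (listPar (parts α)).graph.iso (listPar (parts β)).graph :=
        iso_trans (iso_symm (equiv_parts α).graph_iso)
          (iso_trans hiso' (equiv_parts β).graph_iso)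
      have hm := matching (parts α) (parts β) (parts_conn α hα) (parts_conn β hβ)
        (fun x hx y hy hxy => ih x y (hbound x hx y hy) (parts_unitFree α hα x hx)
          (parts_unitFree β hβ y hy) hxy) hg
      exact ((equiv_parts α).trans hm).trans (equiv_parts β).symm
    cases φ with
    | unit => exact hφ.elim
    | par φ₁ φ₂ => exact key _ _ hn hφ hψ hiso (Or.inl ⟨_, _, rfl⟩)
    | pos a =>
      cases ψ with
      | unit => exact hψ.elim
      | par ψ₁ ψ₂ => exact key _ _ hn hφ hψ hiso (Or.inr ⟨_, _, rfl⟩)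
      | pos b =>
        obtain rfl : a = b := by
          have := iso_single_single hiso; simpa using this
        exact .refl _
      | neg b =>
        exact absurd (iso_single_single hiso) (by simp)
      | tens ψ₁ ψ₂ =>
        exact absurd hiso (not_iso_single_tensor (unitFree_nonempty ψ₁ hψ.1)
          (unitFree_nonempty ψ₂ hψ.2))
    | neg a =>
      cases ψ with
      | unit => exact hψ.elim
      | par ψ₁ ψ₂ => exact key _ _ hn hφ hψ hiso (Or.inr ⟨_, _, rfl⟩)
      | pos b =>
        exact absurd (iso_single_single hiso) (by simp)
      | neg b =>
        obtain rfl : a = b := by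
          have := iso_single_single hiso; simpa using this
        exact .refl _
      | tens ψ₁ ψ₂ =>
        exact absurd hiso (not_iso_single_tensor (unitFree_nonempty ψ₁ hψ.1)
          (unitFree_nonempty ψ₂ hψ.2))
    | tens φ₁ φ₂ =>
      cases ψ with
      | unit => exact hψ.elim
      | par ψ₁ ψ₂ => exact key _ _ hn hφ hψ hiso (Or.inr ⟨_, _, rfl⟩)
      | pos b =>
        exact absurd (iso_symm hiso) (not_iso_single_tensor
          (unitFree_nonempty φ₁ hφ.1) (unitFree_nonempty φ₂ hφ.2))
      | neg b =>
        exact absurd (iso_symm hiso) (not_iso_single_tensor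
          (unitFree_nonempty φ₁ hφ.1) (unitFree_nonempty φ₂ hφ.2))
      | tens ψ₁ ψ₂ =>
        have hiso' : (Formula.tens φ₁ φ₂).negf.graph.iso (Formula.tens ψ₁ ψ₂).negf.graph :=
          iso_trans (Formula.graph_negf _)
            (iso_trans (iso_dual hiso) (iso_symm (Formula.graph_negf _)))
        have hsz : fsize (Formula.tens φ₁ φ₂).negf + fsize (Formula.tens ψ₁ ψ₂).negf ≤
            n + 1 := by rw [fsize_negf, fsize_negf]; exact hn
        have hneg := key _ _ hsz (unitFree_negf _ hφ) (unitFree_negf _ hψ) hiso'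
          (Or.inl ⟨_, _, rfl⟩)
        have h2 := hneg.negf
        rw [Formula.negf_negf, Formula.negf_negf] at h2
        exact h2

/-- For all formulas `φ` and `ψ`, `φ ≡ ψ` if and only if the
graphs `[φ]` and `[ψ]` are isomorphic. -/
theorem formula_equiv_iff_graph_iso (φ ψ : Formula) :
    Formula.equiv φ ψ ↔ φ.graph.iso ψ.graph := by
  constructor
  · exact Formula.equiv.graph_iso
  · intro h
    rcases reduce φ with h₁ | ⟨φ', u₁, h₁⟩ <;> rcases reduce ψ with h₂ | ⟨ψ', u₂, h₂⟩
    · exact h₁.trans h₂.symm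
    · exfalso
      have hiso' : LGraph.empty.iso ψ'.graph :=
        iso_trans (iso_symm h₁.graph_iso) (iso_trans h h₂.graph_iso)
      rcases hiso' with ⟨f⟩
      exact (f.toEquiv.symm (unitFree_nonempty ψ' u₂).some).elim
    · exfalso
      have hiso' : LGraph.empty.iso φ'.graph :=
        iso_trans (iso_symm h₂.graph_iso) (iso_trans (iso_symm h) h₁.graph_iso)
      rcases hiso' with ⟨f⟩
      exact (f.toEquiv.symm (unitFree_nonempty φ' u₁).some).elim
    · have hiso' : φ'.graph.iso ψ'.graph :=
        iso_trans (iso_symm h₁.graph_iso) (iso_trans h h₂.graph_iso)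
      exact (h₁.trans (main_lemma (fsize φ' + fsize ψ') φ' ψ' le_rfl u₁ u₂ hiso')).trans
        h₂.symm
end GSP
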